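/- Let X be an operator on a finite-dimensional Hilbert space and (Π_k) a finite family of orthogonal projectors with ker(Σ_k Π_k) = {0} and Π_k X Π_l = 0 for all k ≠ l. Then ker X = Σ_k (ker X ∩ Π_k H), i.e., the kernel of X is the sum of its intersections with the ranges of the projectors. -/

import Mathlib

open Matrix

lemma toEuclideanLin_mul_apply {n : ℕ} (A B : Matrix (Fin n) (Fin n) ℂ)
    (v : EuclideanSpace ℂ (Fin n)) :
    Matrix.toEuclideanLin (A * B) v = Matrix.toEuclideanLin A (Matrix.toEuclideanLin B v) := by
  simp [Matrix.toEuclideanLin_apply, Matrix.mulVec_mulVec]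

/-- If `(Π_k)` is a finite family of orthogonal projectors with `ker (Σ_k Π_k) = {0}` and
`Π_k X Π_l = 0` for `k ≠ l`, then `ker X = Σ_k (ker X ∩ Π_k H)`. -/
theorem stmt_5 {n m : ℕ} (X : Matrix (Fin n) (Fin n) ℂ) (Pi : Fin m → Matrix (Fin n) (Fin n) ℂ)
    (hherm : ∀ k, (Pi k)ᴴ = Pi k) (hidem : ∀ k, Pi k * Pi k = Pi k)
    (hker : LinearMap.ker (Matrix.toEuclideanLin (∑ k, Pi k)) = ⊥)
    (hXoff : ∀ k l, k ≠ l → Pi k * X * Pi l = 0) :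
    LinearMap.ker (Matrix.toEuclideanLin X)
      = ⨆ k, (LinearMap.ker (Matrix.toEuclideanLin X)
          ⊓ LinearMap.range (Matrix.toEuclideanLin (Pi k))) := by
  set S : Matrix (Fin n) (Fin n) ℂ := ∑ k, Pi k with hS
  have hSinj : Function.Injective (Matrix.toEuclideanLin S) :=
    LinearMap.ker_eq_bot.mp hker
  have hSsurj : Function.Surjective (Matrix.toEuclideanLin S) :=
    (LinearMap.injective_iff_surjective).mp hSinj
  apply le_antisymm
  · intro x hx
    obtain ⟨y, hy⟩ := hSsurj x
    have hx0 : Matrix.toEuclideanLin X x = 0 := hx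
    -- key identity : S * (X * Pi k) = Pi k * X * Pi k = Pi k * (X * S)
    have key : ∀ k, S * (X * Pi k) = Pi k * (X * S) := by
      intro k
      have h1 : S * (X * Pi k) = Pi k * X * Pi k := by
        rw [hS, Finset.sum_mul]
        rw [Finset.sum_eq_single k]
        · rw [mul_assoc]
        · intro l _ hl
          have := hXoff l k hl
          rw [← mul_assoc]; exact this
        · simp
      have h2 : Pi k * (X * S) = Pi k * X * Pi k := by
        rw [hS, Finset.mul_sum, Finset.mul_sum]
        rw [Finset.sum_eq_single k]
        · rw [mul_assoc]
        · intro l _ hl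
          have := hXoff k l hl.symm
          rw [mul_assoc] at this
          exact this
        · simp
      rw [h1, h2]
    have hx_eq : x = ∑ k, Matrix.toEuclideanLin (Pi k) y := by
      rw [← hy, hS]
      rw [show Matrix.toEuclideanLin (∑ k, Pi k) = ∑ k, Matrix.toEuclideanLin (Pi k) from
        map_sum Matrix.toEuclideanLin.toLinearMap _ _]
      simp [LinearMap.sum_apply]
    rw [hx_eq]
    apply Submodule.sum_mem
    intro k _
    apply Submodule.mem_iSup_of_mem k
    refine ⟨?_, ⟨y, rfl⟩⟩
    -- show X (Pi k y) = 0
    have hkerXP : Matrix.toEuclideanLin (X * Pi k) y = 0 := by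
      apply hSinj
      rw [← toEuclideanLin_mul_apply, key k]
      rw [toEuclideanLin_mul_apply, toEuclideanLin_mul_apply, hy, hx0]
      simp
    rw [toEuclideanLin_mul_apply] at hkerXP
    exact hkerXP
  · apply iSup_le
    intro k
    exact inf_le_left
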